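/- arXiv:0804.0436 — 3 statements merged into one kernel-verified Lean document; each statement's English description precedes it below -/
import Mathlib

section
/- Let 𝔐 = (V,⟨·,·⟩,A) be a model of neutral signature (2,2). If 𝔐 is spacelike Osserman, then 𝔐 is null Osserman, i.e. J_A(v) is nilpotent for every null vector v. -/
open Matrix BigOperators

/-- `V = ℝ⁴`. -/
abbrev V4 : Type := Fin 4 → ℝ

/-- The neutral inner product of signature (2,2):
`⟨x,y⟩ = −x₁y₁ − x₂y₂ + x₃y₃ + x₄y₄`. -/
def nip (x y : V4) : ℝ := -(x 0 * y 0) - x 1 * y 1 + x 2 * y 2 + x 3 * y 3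

/-- The signs `ε₁ = ε₂ = −1`, `ε₃ = ε₄ = 1`. -/
def eps : Fin 4 → ℝ := ![-1, -1, 1, 1]

/-- The standard basis vectors `e i`. -/
def stdb (i : Fin 4) : V4 := fun j => if j = i then 1 else 0

/-- A 4-linear map `A : V⁴ → ℝ` (linearity in each slot). -/
def IsMultilinear (A : V4 → V4 → V4 → V4 → ℝ) : Prop :=
  (∀ (c : ℝ) (x x' y z w : V4), A (c • x + x') y z w = c * A x y z w + A x' y z w) ∧
  (∀ (c : ℝ) (x y y' z w : V4), A x (c • y + y') z w = c * A x y z w + A x y' z w) ∧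
  (∀ (c : ℝ) (x y z z' w : V4), A x y (c • z + z') w = c * A x y z w + A x y z' w) ∧
  (∀ (c : ℝ) (x y z w w' : V4), A x y z (c • w + w') = c * A x y z w + A x y z w')

/-- Curvature symmetries:
`A(x,y,z,v) = −A(y,x,z,v) = A(z,v,x,y)` and the first Bianchi identity. -/
def HasCurvSym (A : V4 → V4 → V4 → V4 → ℝ) : Prop :=
  (∀ x y z w, A x y z w = - A y x z w) ∧
  (∀ x y z w, A x y z w = A z w x y) ∧
  (∀ x y z w, A x y z w + A y z x w + A z x y w = 0)

/-- An algebraic curvature tensor on `(V,⟨·,·⟩)`. -/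
def IsModel (A : V4 → V4 → V4 → V4 → ℝ) : Prop := IsMultilinear A ∧ HasCurvSym A

/-- The Jacobi operator `J_A(x)`, as a matrix: it is the unique linear map with
`⟨J_A(x)y, z⟩ = A(y,x,x,z)`; its matrix entries are `J i j = ε i * A(e j, x, x, e i)`. -/
def jacobi (A : V4 → V4 → V4 → V4 → ℝ) (x : V4) : Matrix (Fin 4) (Fin 4) ℝ :=
  Matrix.of fun i j => eps i * A (stdb j) x x (stdb i)

/-- Two endomorphisms of `V` are similar (conjugate by an invertible linear map). -/
def SimilarMat (M N : Matrix (Fin 4) (Fin 4) ℝ) : Prop :=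
  ∃ L : Matrix (Fin 4) (Fin 4) ℝ, IsUnit L.det ∧ M * L = L * N

/-- Spacelike Osserman: the characteristic polynomial of `J_A` is constant on
unit spacelike vectors. -/
def SpacelikeOsserman (A : V4 → V4 → V4 → V4 → ℝ) : Prop :=
  ∀ u w : V4, nip u u = 1 → nip w w = 1 → (jacobi A u).charpoly = (jacobi A w).charpoly

/-- Timelike Osserman: the characteristic polynomial of `J_A` is constant on
unit timelike vectors. -/
def TimelikeOsserman (A : V4 → V4 → V4 → V4 → ℝ) : Prop :=
  ∀ u w : V4, nip u u = -1 → nip w w = -1 → (jacobi A u).charpoly = (jacobi A w).charpoly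

/-- Null Osserman: `J_A(v)` is nilpotent for every null vector `v`. -/
def NullOsserman (A : V4 → V4 → V4 → V4 → ℝ) : Prop :=
  ∀ v : V4, nip v v = 0 → IsNilpotent (jacobi A v)

/-- Spacelike Jordan Osserman: the Jordan normal form of `J_A` is constant on
unit spacelike vectors. -/
def SpacelikeJordanOsserman (A : V4 → V4 → V4 → V4 → ℝ) : Prop :=
  ∀ u w : V4, nip u u = 1 → nip w w = 1 → SimilarMat (jacobi A u) (jacobi A w)

/-- Timelike Jordan Osserman. -/
def TimelikeJordanOsserman (A : V4 → V4 → V4 → V4 → ℝ) : Prop :=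
  ∀ u w : V4, nip u u = -1 → nip w w = -1 → SimilarMat (jacobi A u) (jacobi A w)

/-- Null Jordan Osserman: the Jordan normal form of `J_A` is constant on
nonzero null vectors. -/
def NullJordanOsserman (A : V4 → V4 → V4 → V4 → ℝ) : Prop :=
  ∀ u w : V4, u ≠ 0 → w ≠ 0 → nip u u = 0 → nip w w = 0 →
    SimilarMat (jacobi A u) (jacobi A w)

/-- The Ricci tensor `ρ_A(x,y) = Σᵢ εᵢ A(eᵢ,x,y,eᵢ)`. -/
def ricci (A : V4 → V4 → V4 → V4 → ℝ) (x y : V4) : ℝ :=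
  ∑ i : Fin 4, eps i * A (stdb i) x y (stdb i)

/-- Einstein: `ρ_A = c⟨·,·⟩`. -/
def Einstein (A : V4 → V4 → V4 → V4 → ℝ) : Prop :=
  ∃ c : ℝ, ∀ x y : V4, ricci A x y = c * nip x y

/-- The scalar curvature `τ_A = Σᵢ εᵢ ρ_A(eᵢ,eᵢ)`. -/
def scal (A : V4 → V4 → V4 → V4 → ℝ) : ℝ :=
  ∑ i : Fin 4, eps i * ricci A (stdb i) (stdb i)

/-- The Weyl tensor. -/
noncomputable def weyl (A : V4 → V4 → V4 → V4 → ℝ) (x y z v : V4) : ℝ :=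
  A x y z v + (scal A / 6) * (nip y z * nip x v - nip x z * nip y v)
    - (1/2) * (ricci A y z * nip x v - ricci A x z * nip y v
        + ricci A x v * nip y z - ricci A y v * nip x z)

/-- A 2-vector `x ∧ y`, represented by its antisymmetric coefficient matrix. -/
def wedge (x y : V4) : Matrix (Fin 4) (Fin 4) ℝ :=
  Matrix.of fun i j => x i * y j - x j * y i

/-- The Weyl tensor as a symmetric bilinear form on 2-vectors, determined by
`W_A(x∧y, z∧v) = W_A(x,y,z,v)`. -/
noncomputable def weylForm (A : V4 → V4 → V4 → V4 → ℝ) (α β : Matrix (Fin 4) (Fin 4) ℝ) : ℝ :=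
  (1/4) * ∑ i : Fin 4, ∑ j : Fin 4, ∑ k : Fin 4, ∑ l : Fin 4,
    α i j * β k l * weyl A (stdb i) (stdb j) (stdb k) (stdb l)

/-- `E₁^ε = (1/√2)(e₁∧e₂ + ε e₃∧e₄)`, `E₂^ε = (1/√2)(e₁∧e₃ + ε e₂∧e₄)`,
`E₃^ε = (1/√2)(e₁∧e₄ − ε e₂∧e₃)`.  For `ε = 1` this is the standard basis of the
self-dual 2-vectors `Λ⁺`; for `ε = −1`, of the anti-self-dual 2-vectors `Λ⁻`. -/
noncomputable def Evec (ε : ℝ) : Fin 3 → Matrix (Fin 4) (Fin 4) ℝ :=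
  ![(Real.sqrt 2)⁻¹ • (wedge (stdb 0) (stdb 1) + ε • wedge (stdb 2) (stdb 3)),
    (Real.sqrt 2)⁻¹ • (wedge (stdb 0) (stdb 2) + ε • wedge (stdb 1) (stdb 3)),
    (Real.sqrt 2)⁻¹ • (wedge (stdb 0) (stdb 3) - ε • wedge (stdb 1) (stdb 2))]

/-- The space `Λ⁺` of self-dual 2-vectors. -/
def LambdaPlus : Submodule ℝ (Matrix (Fin 4) (Fin 4) ℝ) :=
  Submodule.span ℝ (Set.range (Evec 1))

/-- The space `Λ⁻` of anti-self-dual 2-vectors. -/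
def LambdaMinus : Submodule ℝ (Matrix (Fin 4) (Fin 4) ℝ) :=
  Submodule.span ℝ (Set.range (Evec (-1)))

/-- Self-dual: the Weyl form vanishes identically on `Λ⁻`. -/
def SelfDual (A : V4 → V4 → V4 → V4 → ℝ) : Prop :=
  ∀ α ∈ LambdaMinus, ∀ β ∈ LambdaMinus, weylForm A α β = 0

/-- Anti-self-dual: the Weyl form vanishes identically on `Λ⁺`. -/
def AntiSelfDual (A : V4 → V4 → V4 → V4 → ℝ) : Prop :=
  ∀ α ∈ LambdaPlus, ∀ β ∈ LambdaPlus, weylForm A α β = 0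

/-- The curvature tensor `A⁰` of constant sectional curvature `+1`. -/
def Acurv0 (x y z v : V4) : ℝ := nip y z * nip x v - nip x z * nip y v

/-- The curvature tensor `A^Ψ` of a skew-adjoint endomorphism `Ψ`. -/
def AcurvPsi (Ψ : Matrix (Fin 4) (Fin 4) ℝ) (x y z v : V4) : ℝ :=
  nip (Ψ.mulVec y) z * nip (Ψ.mulVec x) v - nip (Ψ.mulVec x) z * nip (Ψ.mulVec y) v
    - 2 * nip (Ψ.mulVec x) y * nip (Ψ.mulVec z) v

/-- Skew-adjoint with respect to the neutral inner product. -/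
def SkewAdjointM (Ψ : Matrix (Fin 4) (Fin 4) ℝ) : Prop :=
  ∀ x y : V4, nip (Ψ.mulVec x) y = - nip x (Ψ.mulVec y)

/-- An orthogonal complex structure: skew-adjoint with `J² = −id`. -/
def OrthComplexStructure (J : Matrix (Fin 4) (Fin 4) ℝ) : Prop :=
  SkewAdjointM J ∧ J * J = -1

/-- An adapted paracomplex structure: skew-adjoint with `P² = id`. -/
def AdaptedParaStructure (P : Matrix (Fin 4) (Fin 4) ℝ) : Prop :=
  SkewAdjointM P ∧ P * P = 1

/-- A paraquaternionic structure. -/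
def Paraquaternionic (P₁ P₂ P₃ : Matrix (Fin 4) (Fin 4) ℝ) : Prop :=
  SkewAdjointM P₁ ∧ SkewAdjointM P₂ ∧ SkewAdjointM P₃ ∧
  P₁ * P₁ = -1 ∧ P₂ * P₂ = 1 ∧ P₃ * P₃ = 1 ∧
  P₁ * P₂ + P₂ * P₁ = 0 ∧ P₁ * P₃ + P₃ * P₁ = 0 ∧ P₂ * P₃ + P₃ * P₂ = 0

/-- The standard paraquaternionic structure: `Ψ₁`. -/
def psi1 : Matrix (Fin 4) (Fin 4) ℝ :=
  !![0, 1, 0, 0; -1, 0, 0, 0; 0, 0, 0, -1; 0, 0, 1, 0]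

/-- The standard paraquaternionic structure: `Ψ₂`. -/
def psi2 : Matrix (Fin 4) (Fin 4) ℝ :=
  !![0, 0, 1, 0; 0, 0, 0, 1; 1, 0, 0, 0; 0, 1, 0, 0]

/-- The standard paraquaternionic structure: `Ψ₃`. -/
def psi3 : Matrix (Fin 4) (Fin 4) ℝ :=
  !![0, 0, 0, 1; 0, 0, -1, 0; 0, -1, 0, 0; 1, 0, 0, 0]

/-- The curvature tensor `A_{κ₀,ξ}` of the Gilkey–Ivanova ansatz. -/
noncomputable def AKxi (κ₀ ξ11 ξ12 ξ13 ξ22 ξ23 ξ33 : ℝ) : V4 → V4 → V4 → V4 → ℝ :=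
  fun x y z w =>
    κ₀ * Acurv0 x y z w + (1/3) *
      (ξ11 * AcurvPsi psi1 x y z w + ξ22 * AcurvPsi psi2 x y z w
        + ξ33 * AcurvPsi psi3 x y z w + ξ12 * AcurvPsi (psi1 + psi2) x y z w
        + ξ13 * AcurvPsi (psi1 + psi3) x y z w + ξ23 * AcurvPsi (psi2 + psi3) x y z w)

/-- The `3 × 3` matrix `𝒥_{κ₀,ξ}`. -/
def Jmat (κ₀ ξ11 ξ12 ξ13 ξ22 ξ23 ξ33 : ℝ) : Matrix (Fin 3) (Fin 3) ℝ :=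
  κ₀ • (1 : Matrix (Fin 3) (Fin 3) ℝ) +
    !![ξ11 + ξ12 + ξ13, -ξ12, -ξ13;
       ξ12, -ξ22 - ξ12 - ξ23, -ξ23;
       ξ13, -ξ23, -ξ33 - ξ13 - ξ23]

/-- An oriented orthonormal basis of `(V,⟨·,·⟩)`: `b₁, b₂` timelike, `b₃, b₄` spacelike,
mutually orthogonal, with positively-oriented change-of-basis matrix. -/
def OrientedONB (b : Fin 4 → V4) : Prop :=
  (∀ i j : Fin 4, nip (b i) (b j) = if i = j then eps i else 0) ∧
  0 < (Matrix.of fun i j : Fin 4 => b j i).det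


section OssermanHelpers

open Polynomial

lemma eval_charpoly4 (M : Matrix (Fin 4) (Fin 4) ℝ) (x : ℝ) :
    M.charpoly.eval x = (x • (1 : Matrix (Fin 4) (Fin 4) ℝ) - M).det := by
  rw [Matrix.charpoly, ← coe_evalRingHom, RingHom.map_det]
  congr 1
  ext i j
  by_cases hij : i = j
  · subst hij
    simp [Matrix.charmatrix_apply_eq, Matrix.one_apply, Matrix.sub_apply, Matrix.smul_apply]
  · simp [Matrix.charmatrix_apply_ne _ _ _ hij, Matrix.one_apply, hij, Matrix.sub_apply,
      Matrix.smul_apply]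

lemma charpoly_smul_coeff (M : Matrix (Fin 4) (Fin 4) ℝ) (c : ℝ) (hc : c ≠ 0) (k : ℕ)
    (hk : k ≤ 4) :
    ((c • M).charpoly).coeff k = c ^ (4 - k) * M.charpoly.coeff k := by
  have hdeg : M.charpoly.natDegree = 4 := by
    simp [Matrix.charpoly_natDegree_eq_dim]
  have key : (c • M).charpoly
      = ∑ i ∈ Finset.range 5, C (c ^ (4 - i) * M.charpoly.coeff i) * X ^ i := by
    apply Polynomial.eq_of_infinite_eval_eq
    apply Set.infinite_of_injective_forall_mem (f := fun x : ℕ => (x : ℝ))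
    · exact fun a b hab => Nat.cast_injective hab
    intro n
    show _ = _
    rw [eval_charpoly4]
    have h1 : ((n : ℝ) • (1 : Matrix (Fin 4) (Fin 4) ℝ) - c • M)
        = c • ((((n : ℝ)/c) • (1 : Matrix (Fin 4) (Fin 4) ℝ)) - M) := by
      rw [smul_sub, smul_smul]
      field_simp
    rw [h1, Matrix.det_smul, ← eval_charpoly4]
    rw [Polynomial.eval_eq_sum_range, hdeg]
    rw [eval_finset_sum]
    rw [Finset.mul_sum]
    apply Finset.sum_congr rfl
    intro i hi
    have hi4 : i ≤ 4 := by
      have := Finset.mem_range.mp hi; omega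
    simp only [eval_mul, eval_C, eval_pow, eval_X, Fintype.card_fin]
    rw [← pow_sub_mul_pow c hi4]
    rw [div_pow]
    field_simp
  rw [key]
  rw [finset_sum_coeff]
  simp only [coeff_C_mul, coeff_X_pow]
  rw [Finset.sum_eq_single k]
  · simp
  · intro b _ hb; simp [Ne.symm hb]
  · intro hk'; exact absurd (Finset.mem_range.mpr (by omega)) hk'

lemma nip_smul (c d : ℝ) (x y : V4) : nip (c • x) (d • y) = (c * d) * nip x y := by
  simp only [nip, Pi.smul_apply, smul_eq_mul]
  ring

lemma A_lin (A : V4 → V4 → V4 → V4 → ℝ) (hA : IsMultilinear A) :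
    (∀ (c : ℝ) (x y z w : V4), A x (c • y) z w = c * A x y z w) ∧
    (∀ x y y' z w : V4, A x (y + y') z w = A x y z w + A x y' z w) ∧
    (∀ (c : ℝ) (x y z w : V4), A x y (c • z) w = c * A x y z w) ∧
    (∀ x y z z' w : V4, A x y (z + z') w = A x y z w + A x y z' w) ∧
    (∀ x z w : V4, A x 0 z w = 0) := by
  obtain ⟨-, h2, h3, -⟩ := hA
  have z2 : ∀ x z w : V4, A x 0 z w = 0 := by
    intro x z w
    have := h2 1 x 0 0 z w
    simp at this
    linarith
  have z3 : ∀ x y w : V4, A x y 0 w = 0 := by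
    intro x y w
    have := h3 1 x y 0 0 w
    simp at this
    linarith
  refine ⟨?_, ?_, ?_, ?_, z2⟩
  · intro c x y z w; have := h2 c x y 0 z w; simpa [z2] using this
  · intro x y y' z w; have := h2 1 x y y' z w; simpa using this
  · intro c x y z w; have := h3 c x y z 0 w; simpa [z3] using this
  · intro x y z z' w; have := h3 1 x y z z' w; simpa using this

lemma jacobi_entry_expand (A : V4 → V4 → V4 → V4 → ℝ) (hA : IsMultilinear A)
    (s t : V4) (lam : ℝ) (i j : Fin 4) :
    jacobi A (s + lam • t) i j
      = jacobi A s i j + (eps i * (A (stdb j) s t (stdb i) + A (stdb j) t s (stdb i))) * lam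
        + jacobi A t i j * lam ^ 2 := by
  obtain ⟨hs2, ha2, hs3, ha3, -⟩ := A_lin A hA
  simp only [jacobi, Matrix.of_apply, ha2, ha3, hs2, hs3]
  ring

lemma jacobi_smul (A : V4 → V4 → V4 → V4 → ℝ) (hA : IsMultilinear A) (c : ℝ) (x : V4) :
    jacobi A (c • x) = (c ^ 2) • jacobi A x := by
  obtain ⟨hs2, -, hs3, -, -⟩ := A_lin A hA
  ext i j
  simp only [jacobi, Matrix.of_apply, Matrix.smul_apply, smul_eq_mul, hs2, hs3]
  ring

lemma jacobi_zero (A : V4 → V4 → V4 → V4 → ℝ) (hA : IsMultilinear A) :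
    jacobi A 0 = 0 := by
  obtain ⟨-, -, -, -, z2⟩ := A_lin A hA
  ext i j
  simp [jacobi, z2]

end OssermanHelpers

/-- Lemma 2.1 (1): a spacelike Osserman model of signature (2,2) is null Osserman. -/
theorem spacelike_osserman_implies_null_osserman (A : V4 → V4 → V4 → V4 → ℝ)
    (hA : IsModel A) (h : SpacelikeOsserman A) : NullOsserman A := by
  intro v hv
  obtain ⟨hm, -⟩ := hA
  by_cases hv0 : v = 0
  · subst hv0
    rw [jacobi_zero A hm]
    exact IsNilpotent.zero
  set s : V4 := ![0, 0, v 2, v 3] with hs_def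
  set t : V4 := ![v 0, v 1, 0, 0] with ht_def
  set a : ℝ := v 2 ^ 2 + v 3 ^ 2 with ha_def
  have hvsum : v 0 ^ 2 + v 1 ^ 2 = a := by
    simp only [nip] at hv
    nlinarith [hv]
  have ha_pos : 0 < a := by
    rcases lt_or_eq_of_le (by positivity : (0:ℝ) ≤ a) with h' | h'
    · exact h'
    · exfalso
      apply hv0
      have h2 : v 2 = 0 := by nlinarith
      have h3 : v 3 = 0 := by nlinarith
      have h0 : v 0 = 0 := by nlinarith
      have h1 : v 1 = 0 := by nlinarith
      funext i
      fin_cases i <;> simp [h0, h1, h2, h3]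
  have hst : s + t = v := by
    funext i
    fin_cases i <;> simp [hs_def, ht_def]
  have hnx : ∀ lam : ℝ, nip (s + lam • t) (s + lam • t) = a * (1 - lam ^ 2) := by
    intro lam
    simp only [nip, hs_def, ht_def, ha_def, Pi.add_apply, Pi.smul_apply, smul_eq_mul,
      Matrix.cons_val_zero, Matrix.cons_val_one, Matrix.head_cons, Matrix.cons_val_two,
      Matrix.cons_val_three, Matrix.tail_cons]
    nlinarith [hvsum]
  have hsa : nip s s = a := by
    have := hnx 0
    simpa using this
  set u0 : V4 := (Real.sqrt a)⁻¹ • s with hu0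
  have hsa0 : Real.sqrt a ≠ 0 := ne_of_gt (Real.sqrt_pos.mpr ha_pos)
  have hu0unit : nip u0 u0 = 1 := by
    rw [hu0, nip_smul, hsa]
    have hE : (Real.sqrt a)⁻¹ * (Real.sqrt a)⁻¹ * a = a / (Real.sqrt a * Real.sqrt a) := by
      field_simp
    rw [hE, Real.mul_self_sqrt ha_pos.le, div_self (ne_of_gt ha_pos)]
  set p := (jacobi A u0).charpoly with hp
  set Mp : Matrix (Fin 4) (Fin 4) (Polynomial ℝ) := Matrix.of fun i j =>
    Polynomial.C (jacobi A s i j)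
      + Polynomial.C (eps i * (A (stdb j) s t (stdb i) + A (stdb j) t s (stdb i))) * Polynomial.X
      + Polynomial.C (jacobi A t i j) * Polynomial.X ^ 2 with hMp
  have hmap : ∀ lam : ℝ, Mp.map (Polynomial.evalRingHom lam) = jacobi A (s + lam • t) := by
    intro lam
    ext i j
    simp only [hMp, Matrix.map_apply, Matrix.of_apply, Polynomial.coe_evalRingHom,
      Polynomial.eval_add, Polynomial.eval_mul, Polynomial.eval_C, Polynomial.eval_X,
      Polynomial.eval_pow]
    rw [jacobi_entry_expand A hm]
  have hcoeff : ∀ (lam : ℝ) (k : ℕ),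
      (jacobi A (s + lam • t)).charpoly.coeff k = (Mp.charpoly.coeff k).eval lam := by
    intro lam k
    rw [← hmap lam, Matrix.charpoly_map]
    simp [Polynomial.coeff_map]
  have hval : ∀ lam : ℝ, lam ∈ Set.Ioo (-1 : ℝ) 1 → ∀ k : ℕ, k ≤ 4 →
      (jacobi A (s + lam • t)).charpoly.coeff k
        = (a * (1 - lam ^ 2)) ^ (4 - k) * p.coeff k := by
    intro lam hlam k hk
    have hc : 0 < a * (1 - lam ^ 2) := by
      apply mul_pos ha_pos
      nlinarith [hlam.1, hlam.2]
    have hsc : Real.sqrt (a * (1 - lam ^ 2)) ≠ 0 := ne_of_gt (Real.sqrt_pos.mpr hc)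
    set u : V4 := (Real.sqrt (a * (1 - lam ^ 2)))⁻¹ • (s + lam • t) with hu
    have huunit : nip u u = 1 := by
      rw [hu, nip_smul, hnx lam]
      have hE : (Real.sqrt (a * (1 - lam ^ 2)))⁻¹ * (Real.sqrt (a * (1 - lam ^ 2)))⁻¹
          * (a * (1 - lam ^ 2))
          = (a * (1 - lam ^ 2)) / (Real.sqrt (a * (1 - lam ^ 2)) * Real.sqrt (a * (1 - lam ^ 2))) := by
        field_simp
      rw [hE, Real.mul_self_sqrt hc.le, div_self (ne_of_gt hc)]
    have hx : s + lam • t = Real.sqrt (a * (1 - lam ^ 2)) • u := by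
      rw [hu, smul_smul, mul_inv_cancel₀ hsc, one_smul]
    have hjx : jacobi A (s + lam • t) = (a * (1 - lam ^ 2)) • jacobi A u := by
      rw [hx, jacobi_smul A hm, Real.sq_sqrt hc.le]
    rw [hjx, charpoly_smul_coeff _ _ (ne_of_gt hc) k hk, h u u0 huunit hu0unit]
  have hzero : ∀ k : ℕ, k < 4 → (jacobi A v).charpoly.coeff k = 0 := by
    intro k hk
    have hPQ : Mp.charpoly.coeff k
        = Polynomial.C (p.coeff k)
          * (Polynomial.C a - Polynomial.C a * Polynomial.X ^ 2) ^ (4 - k) := by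
      apply Polynomial.eq_of_infinite_eval_eq
      apply Set.Infinite.mono ?_ (Set.Ioo_infinite (show (-1:ℝ) < 1 by norm_num))
      intro lam hlam
      show _ = _
      rw [← hcoeff lam k, hval lam hlam k hk.le]
      simp only [Polynomial.eval_mul, Polynomial.eval_pow, Polynomial.eval_sub,
        Polynomial.eval_C, Polynomial.eval_X]
      have hE : a * (1 - lam ^ 2) = a - a * lam ^ 2 := by ring
      rw [hE]
      ring
    have h1 := hcoeff 1 k
    rw [one_smul, hst] at h1
    rw [h1, hPQ]
    simp only [Polynomial.eval_mul, Polynomial.eval_pow, Polynomial.eval_sub,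
      Polynomial.eval_C, Polynomial.eval_X, one_pow, mul_one, sub_self]
    rw [zero_pow (by omega : 4 - k ≠ 0), mul_zero]
  have hdeg : (jacobi A v).charpoly.natDegree = 4 := by
    simp [Matrix.charpoly_natDegree_eq_dim]
  have hcp : (jacobi A v).charpoly = Polynomial.X ^ 4 := by
    ext k
    rcases lt_trichotomy k 4 with hk | hk | hk
    · rw [hzero k hk, Polynomial.coeff_X_pow]
      simp [Nat.ne_of_lt hk]
    · subst hk
      rw [Polynomial.coeff_X_pow]
      simp only [if_pos rfl]
      have hmon := (jacobi A v).charpoly_monic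
      have := hmon.coeff_natDegree
      rw [hdeg] at this
      exact this
    · rw [Polynomial.coeff_eq_zero_of_natDegree_lt (by rw [hdeg]; exact hk),
        Polynomial.coeff_X_pow]
      simp [Nat.ne_of_gt hk]
  refine ⟨4, ?_⟩
  have h4 := Matrix.aeval_self_charpoly (jacobi A v)
  rw [hcp] at h4
  simpa using h4
end

section
/- Let P be an adapted paracomplex structure on (V,⟨·,·⟩), let κ_P ≠ 0, and let A = κ_PA^P. Then for every null vector v and every y ∈ V one has J_A(v)y = 3κ_P⟨y,Pv⟩Pv, and the model 𝔐 = (V,⟨·,·⟩,A) is null Jordan Osserman. -/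
open Matrix BigOperators

lemma nip_symm (x y : V4) : nip x y = nip y x := by simp [nip]; ring

lemma nip_stdb_right (x : V4) (i : Fin 4) : nip x (stdb i) = eps i * x i := by
  fin_cases i <;> simp [nip, stdb, eps]

lemma eps_sq (i : Fin 4) : eps i * eps i = 1 := by
  fin_cases i <;> norm_num [eps]

lemma jacobi_eq (P : Matrix (Fin 4) (Fin 4) ℝ)
    (hP : AdaptedParaStructure P) (κP : ℝ)
    (A : V4 → V4 → V4 → V4 → ℝ)
    (hA : A = fun x y z w => κP * AcurvPsi P x y z w) (v : V4) :
    jacobi A v = Matrix.of fun i j =>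
      (3 * κP) * (P.mulVec v) i * (eps j * (P.mulVec v) j) := by
  obtain ⟨hsk, -⟩ := hP
  have h0 : nip (P.mulVec v) v = 0 := by
    have h1 := hsk v v
    have h2 : nip v (P.mulVec v) = nip (P.mulVec v) v := nip_symm _ _
    linarith
  ext i j
  simp only [jacobi, hA, AcurvPsi, Matrix.of_apply]
  rw [h0, hsk (stdb j) v, nip_symm (stdb j) (P.mulVec v)]
  simp only [nip_stdb_right]
  linear_combination (3 * κP * ((P.mulVec v) i) * (eps j * (P.mulVec v) j)) * eps_sq i

lemma jacobi_mulVec (P : Matrix (Fin 4) (Fin 4) ℝ)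
    (hP : AdaptedParaStructure P) (κP : ℝ)
    (A : V4 → V4 → V4 → V4 → ℝ)
    (hA : A = fun x y z w => κP * AcurvPsi P x y z w) (v y : V4) :
    (jacobi A v).mulVec y = (3 * κP * nip y (P.mulVec v)) • P.mulVec v := by
  rw [jacobi_eq P hP κP A hA v]
  funext i
  simp only [Matrix.mulVec, Matrix.of_apply, dotProduct, Fin.sum_univ_four,
    Pi.smul_apply, smul_eq_mul, nip, eps, Matrix.cons_val]
  norm_num
  ring

/-- The canonical nilpotent matrix `E₀₁`. -/
def E01 : Matrix (Fin 4) (Fin 4) ℝ :=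
  !![0,1,0,0; 0,0,0,0; 0,0,0,0; 0,0,0,0]

lemma det_four (M : Matrix (Fin 4) (Fin 4) ℝ) :
    M.det =
      M 0 0 * (M 1 1 * (M 2 2 * M 3 3 - M 2 3 * M 3 2) - M 1 2 * (M 2 1 * M 3 3 - M 2 3 * M 3 1) + M 1 3 * (M 2 1 * M 3 2 - M 2 2 * M 3 1))
    - M 0 1 * (M 1 0 * (M 2 2 * M 3 3 - M 2 3 * M 3 2) - M 1 2 * (M 2 0 * M 3 3 - M 2 3 * M 3 0) + M 1 3 * (M 2 0 * M 3 2 - M 2 2 * M 3 0))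
    + M 0 2 * (M 1 0 * (M 2 1 * M 3 3 - M 2 3 * M 3 1) - M 1 1 * (M 2 0 * M 3 3 - M 2 3 * M 3 0) + M 1 3 * (M 2 0 * M 3 1 - M 2 1 * M 3 0))
    - M 0 3 * (M 1 0 * (M 2 1 * M 3 2 - M 2 2 * M 3 1) - M 1 1 * (M 2 0 * M 3 2 - M 2 2 * M 3 0) + M 1 2 * (M 2 0 * M 3 1 - M 2 1 * M 3 0)) := by
  rw [Matrix.det_succ_row_zero]
  simp [Fin.sum_univ_succ, Matrix.det_fin_three, Fin.succAbove, Matrix.submatrix_apply]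
  ring

set_option maxHeartbeats 1000000 in
lemma similar_canonical (c : ℝ) (hc : c ≠ 0) (a : V4) (ha : a ≠ 0)
    (hnull : -(a 0 * a 0) - a 1 * a 1 + a 2 * a 2 + a 3 * a 3 = 0) :
    ∃ L : Matrix (Fin 4) (Fin 4) ℝ, IsUnit L.det ∧
      (Matrix.of fun i j => c * a i * (eps j * a j)) * L = L * E01 := by
  have hs : 0 < a 0 ^ 2 + a 1 ^ 2 := by
    rcases lt_or_ge 0 (a 0 ^ 2 + a 1 ^ 2) with h | h
    · exact h
    · exfalso
      apply ha
      have e0 : a 0 ^ 2 = 0 := le_antisymm (by nlinarith [sq_nonneg (a 1)]) (sq_nonneg _)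
      have e1 : a 1 ^ 2 = 0 := le_antisymm (by nlinarith [sq_nonneg (a 0)]) (sq_nonneg _)
      have e2 : a 2 ^ 2 = 0 := le_antisymm (by nlinarith [sq_nonneg (a 3)]) (sq_nonneg _)
      have e3 : a 3 ^ 2 = 0 := le_antisymm (by nlinarith [sq_nonneg (a 2)]) (sq_nonneg _)
      funext i
      fin_cases i
      · exact sq_eq_zero_iff.mp e0
      · exact sq_eq_zero_iff.mp e1
      · exact sq_eq_zero_iff.mp e2
      · exact sq_eq_zero_iff.mp e3
  have ht : (2 * (a 0 ^ 2 + a 1 ^ 2) * c) ≠ 0 :=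
    mul_ne_zero (mul_ne_zero two_ne_zero hs.ne') hc
  refine ⟨!![a 0, -(a 0)/(2*(a 0 ^ 2 + a 1 ^ 2)*c), -(a 1), 0;
             a 1, -(a 1)/(2*(a 0 ^ 2 + a 1 ^ 2)*c), a 0, 0;
             a 2, (a 2)/(2*(a 0 ^ 2 + a 1 ^ 2)*c), 0, -(a 3);
             a 3, (a 3)/(2*(a 0 ^ 2 + a 1 ^ 2)*c), 0, a 2], ?_, ?_⟩
  · rw [isUnit_iff_ne_zero]
    have hdet : (!![a 0, -(a 0)/(2*(a 0 ^ 2 + a 1 ^ 2)*c), -(a 1), 0;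
             a 1, -(a 1)/(2*(a 0 ^ 2 + a 1 ^ 2)*c), a 0, 0;
             a 2, (a 2)/(2*(a 0 ^ 2 + a 1 ^ 2)*c), 0, -(a 3);
             a 3, (a 3)/(2*(a 0 ^ 2 + a 1 ^ 2)*c), 0, a 2] : Matrix (Fin 4) (Fin 4) ℝ).det
        = -(a 2 ^ 2 + a 3 ^ 2)/c := by
      rw [det_four]
      simp only [Matrix.of_apply, Matrix.cons_val]
      norm_num
      field_simp
      ring
    rw [hdet, div_ne_zero_iff]
    refine ⟨by intro h; nlinarith, hc⟩
  · ext i j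
    rw [Matrix.mul_apply, Matrix.mul_apply, Fin.sum_univ_four, Fin.sum_univ_four]
    fin_cases i <;> fin_cases j <;>
      (try simp [eps, E01, Matrix.vecHead, Matrix.vecTail]) <;>
      (try field_simp) <;> (try ring_nf)
    all_goals first
      | linear_combination (c * a 0) * hnull
      | linear_combination (c * a 1) * hnull
      | linear_combination (c * a 2) * hnull
      | linear_combination (c * a 3) * hnull
      | linear_combination (a 0) * hnull
      | linear_combination (a 1) * hnull
      | linear_combination (a 2) * hnull
      | linear_combination (a 3) * hnull

lemma similar_symm_trans {M N O L K : Matrix (Fin 4) (Fin 4) ℝ}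
    (hL : IsUnit L.det) (hK : IsUnit K.det)
    (h1 : M * L = L * O) (h2 : N * K = K * O) : SimilarMat M N := by
  refine ⟨L * K⁻¹, ?_, ?_⟩
  · rw [Matrix.det_mul]
    exact hL.mul (Matrix.isUnit_nonsing_inv_det K hK)
  · have hKinv : K⁻¹ * N = O * K⁻¹ := by
      calc K⁻¹ * N = K⁻¹ * (N * (K * K⁻¹)) := by
            rw [Matrix.mul_nonsing_inv _ hK, mul_one]
        _ = K⁻¹ * (N * K) * K⁻¹ := by rw [← mul_assoc N K K⁻¹, ← mul_assoc]
        _ = K⁻¹ * (K * O) * K⁻¹ := by rw [h2]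
        _ = (K⁻¹ * K) * (O * K⁻¹) := by rw [← mul_assoc K⁻¹ K O, mul_assoc]
        _ = O * K⁻¹ := by rw [Matrix.nonsing_inv_mul _ hK, one_mul]
    calc M * (L * K⁻¹) = (M * L) * K⁻¹ := by rw [mul_assoc]
      _ = L * O * K⁻¹ := by rw [h1]
      _ = L * (O * K⁻¹) := by rw [mul_assoc]
      _ = L * (K⁻¹ * N) := by rw [hKinv]
      _ = (L * K⁻¹) * N := by rw [mul_assoc]

/-- Section 3.4 (case `κ₀ = 0`): for `A = κ_P A^P` with `P` an adapted paracomplex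
structure and `κ_P ≠ 0`, the Jacobi operator on a null vector `v` is
`y ↦ 3κ_P⟨y,Pv⟩Pv`, and the model is null Jordan Osserman. -/
theorem pure_paracomplex_null_jordan_osserman (P : Matrix (Fin 4) (Fin 4) ℝ)
    (hP : AdaptedParaStructure P) (κP : ℝ) (hκP : κP ≠ 0)
    (A : V4 → V4 → V4 → V4 → ℝ)
    (hA : A = fun x y z w => κP * AcurvPsi P x y z w) :
    (∀ v y : V4, nip v v = 0 →
      (jacobi A v).mulVec y = (3 * κP * nip y (P.mulVec v)) • P.mulVec v) ∧
    NullJordanOsserman A := by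
  have hform := jacobi_mulVec P hP κP A hA
  refine ⟨fun v y _ => hform v y, ?_⟩
  intro u w hu hw hnu hnw
  obtain ⟨hsk, hsq⟩ := hP
  have hc : (3 * κP : ℝ) ≠ 0 := mul_ne_zero three_ne_zero hκP
  have key : ∀ v : V4, v ≠ 0 → nip v v = 0 →
      ∃ L : Matrix (Fin 4) (Fin 4) ℝ, IsUnit L.det ∧ jacobi A v * L = L * E01 := by
    intro v hv hnv
    set a : V4 := P.mulVec v with ha_def
    have hPa : P.mulVec a = v := by
      rw [ha_def, Matrix.mulVec_mulVec, hsq, Matrix.one_mulVec]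
    have ha : a ≠ 0 := by
      intro h
      apply hv
      rw [← hPa, h, Matrix.mulVec_zero]
    have hanull : nip a a = 0 := by
      have h1 := hsk a v
      rw [hPa] at h1
      have h2 : nip a (P.mulVec v) = nip a a := by rw [← ha_def]
      rw [h2] at h1
      have h3 : nip v a = nip a v := nip_symm _ _
      have h4 : nip (P.mulVec v) v = nip a v := by rw [← ha_def]
      have h0 : nip (P.mulVec v) v = 0 := by
        have e1 := hsk v v
        have e2 : nip v (P.mulVec v) = nip (P.mulVec v) v := nip_symm _ _
        linarith
      linarith
    have hanull' : -(a 0 * a 0) - a 1 * a 1 + a 2 * a 2 + a 3 * a 3 = 0 := hanull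
    obtain ⟨L, hLu, hL⟩ := similar_canonical (3 * κP) hc a ha hanull'
    refine ⟨L, hLu, ?_⟩
    rw [jacobi_eq P ⟨hsk, hsq⟩ κP A hA v, ← ha_def]
    exact hL
  obtain ⟨L1, hL1u, hL1⟩ := key u hu hnu
  obtain ⟨L2, hL2u, hL2⟩ := key w hw hnw
  exact similar_symm_trans hL1u hL2u hL1 hL2
end

section
/- Let α, β ∈ ℝ, let δ = ±1, and let A be the algebraic curvature tensor on V whose nonvanishing components relative to the standard basis (up to the curvature symmetries) are A₁₂₂₁ = A₄₃₃₄ = δ(α − 1/2), A₁₃₃₁ = A₄₂₂₄ = −δ(α + 1/2), A₁₄₄₁ = A₃₂₂₃ = −β, A₂₁₁₃ = A₂₄₄₃ = −δ/2, A₁₂₂₄ = A₁₃₃₄ = δ/2, A₁₂₃₄ = (δ(−α + 3/2) + β)/3, A₁₄₂₃ = 2(δα − β)/3, A₁₃₄₂ = (δ(−α − 3/2) + β)/3 (a Type II spacelike Osserman tensor). Then for the null vectors u = e₂ − e₃ and v = e₂ + e₃ one has: if β = 0 then rank(J_A(u)) = 0 and rank(J_A(v)) = 1, and if β ≠ 0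 then rank(J_A(u)) = 1 and rank(J_A(v)) = 2; in either case rank(J_A(u)) ≠ rank(J_A(v)), so the model 𝔐 = (V,⟨·,·⟩,A) is not null Jordan Osserman. -/
open Matrix BigOperators

/-- Component tensor of the Type II example. -/
noncomputable def TypeIIComp (α β δ : ℝ) : Fin 4 → Fin 4 → Fin 4 → Fin 4 → ℝ := fun i j k l =>
  ![
    ![
      !![0, 0, 0, 0;
         0, 0, 0, 0;
         0, 0, 0, 0;
         0, 0, 0, 0],
      !![0, (1 / 2) * δ - (δ * α), (1 / 2) * δ, 0;
         (-1 / 2) * δ + (δ * α), 0, 0, (1 / 2) * δ;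
         (-1 / 2) * δ, 0, 0, (1 / 3) * β + (1 / 2) * δ + (-1 / 3) * (δ * α);
         0, (-1 / 2) * δ, (-1 / 3) * β + (-1 / 2) * δ + (1 / 3) * (δ * α), 0],
      !![0, (1 / 2) * δ, (1 / 2) * δ + (δ * α), 0;
         (-1 / 2) * δ, 0, 0, (-1 / 3) * β + (1 / 2) * δ + (1 / 3) * (δ * α);
         (-1 / 2) * δ - (δ * α), 0, 0, (1 / 2) * δ;
         0, (1 / 3) * β + (-1 / 2) * δ + (-1 / 3) * (δ * α), (-1 / 2) * δ, 0],
      !![0, 0, 0, β;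
         0, 0, (-2 / 3) * β + (2 / 3) * (δ * α), 0;
         0, (2 / 3) * β + (-2 / 3) * (δ * α), 0, 0;
         -β, 0, 0, 0]
    ],
    ![
      !![0, (-1 / 2) * δ + (δ * α), (-1 / 2) * δ, 0;
         (1 / 2) * δ - (δ * α), 0, 0, (-1 / 2) * δ;
         (1 / 2) * δ, 0, 0, (-1 / 3) * β + (-1 / 2) * δ + (1 / 3) * (δ * α);
         0, (1 / 2) * δ, (1 / 3) * β + (1 / 2) * δ + (-1 / 3) * (δ * α), 0],
      !![0, 0, 0, 0;
         0, 0, 0, 0;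
         0, 0, 0, 0;
         0, 0, 0, 0],
      !![0, 0, 0, (-2 / 3) * β + (2 / 3) * (δ * α);
         0, 0, β, 0;
         0, -β, 0, 0;
         (2 / 3) * β + (-2 / 3) * (δ * α), 0, 0, 0],
      !![0, (1 / 2) * δ, (-1 / 3) * β + (1 / 2) * δ + (1 / 3) * (δ * α), 0;
         (-1 / 2) * δ, 0, 0, (1 / 2) * δ + (δ * α);
         (1 / 3) * β + (-1 / 2) * δ + (-1 / 3) * (δ * α), 0, 0, (1 / 2) * δ;
         0, (-1 / 2) * δ - (δ * α), (-1 / 2) * δ, 0]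
    ],
    ![
      !![0, (-1 / 2) * δ, (-1 / 2) * δ - (δ * α), 0;
         (1 / 2) * δ, 0, 0, (1 / 3) * β + (-1 / 2) * δ + (-1 / 3) * (δ * α);
         (1 / 2) * δ + (δ * α), 0, 0, (-1 / 2) * δ;
         0, (-1 / 3) * β + (1 / 2) * δ + (1 / 3) * (δ * α), (1 / 2) * δ, 0],
      !![0, 0, 0, (2 / 3) * β + (-2 / 3) * (δ * α);
         0, 0, -β, 0;
         0, β, 0, 0;
         (-2 / 3) * β + (2 / 3) * (δ * α), 0, 0, 0],
      !![0, 0, 0, 0;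
         0, 0, 0, 0;
         0, 0, 0, 0;
         0, 0, 0, 0],
      !![0, (1 / 3) * β + (1 / 2) * δ + (-1 / 3) * (δ * α), (1 / 2) * δ, 0;
         (-1 / 3) * β + (-1 / 2) * δ + (1 / 3) * (δ * α), 0, 0, (1 / 2) * δ;
         (-1 / 2) * δ, 0, 0, (1 / 2) * δ - (δ * α);
         0, (-1 / 2) * δ, (-1 / 2) * δ + (δ * α), 0]
    ],
    ![
      !![0, 0, 0, -β;
         0, 0, (2 / 3) * β + (-2 / 3) * (δ * α), 0;
         0, (-2 / 3) * β + (2 / 3) * (δ * α), 0, 0;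
         β, 0, 0, 0],
      !![0, (-1 / 2) * δ, (1 / 3) * β + (-1 / 2) * δ + (-1 / 3) * (δ * α), 0;
         (1 / 2) * δ, 0, 0, (-1 / 2) * δ - (δ * α);
         (-1 / 3) * β + (1 / 2) * δ + (1 / 3) * (δ * α), 0, 0, (-1 / 2) * δ;
         0, (1 / 2) * δ + (δ * α), (1 / 2) * δ, 0],
      !![0, (-1 / 3) * β + (-1 / 2) * δ + (1 / 3) * (δ * α), (-1 / 2) * δ, 0;
         (1 / 3) * β + (1 / 2) * δ + (-1 / 3) * (δ * α), 0, 0, (-1 / 2) * δ;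
         (1 / 2) * δ, 0, 0, (-1 / 2) * δ + (δ * α);
         0, (1 / 2) * δ, (1 / 2) * δ - (δ * α), 0],
      !![0, 0, 0, 0;
         0, 0, 0, 0;
         0, 0, 0, 0;
         0, 0, 0, 0]
    ]
  ] i j k l

set_option maxHeartbeats 1000000 in
/-- Section 3.7: a Type II spacelike Osserman model of signature (2,2), given by its
components `TypeIIComp α β δ` (`δ = ±1`) relative to the standard basis, is not null
Jordan Osserman: for the null vectors `u = e₂ − e₃` and `v = e₂ + e₃` the ranks of the
Jacobi operators differ. -/
theorem type_II_not_null_jordan_osserman (α β δ : ℝ) (hδ : δ = 1 ∨ δ = -1)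
    (A : V4 → V4 → V4 → V4 → ℝ) (hA : IsModel A)
    (hcomp : ∀ i j k l : Fin 4,
      A (stdb i) (stdb j) (stdb k) (stdb l) = TypeIIComp α β δ i j k l) :
    ((β = 0 → (jacobi A (stdb 1 - stdb 2)).rank = 0 ∧
        (jacobi A (stdb 1 + stdb 2)).rank = 1) ∧
     (β ≠ 0 → (jacobi A (stdb 1 - stdb 2)).rank = 1 ∧
        (jacobi A (stdb 1 + stdb 2)).rank = 2)) ∧
    (jacobi A (stdb 1 - stdb 2)).rank ≠ (jacobi A (stdb 1 + stdb 2)).rank ∧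
    ¬ NullJordanOsserman A := by
  
  -- multilinearity in slots 2 and 3
  have h2 := hA.1.2.1
  have h3 := hA.1.2.2.1
  have key : ∀ (s : ℝ) (x w : V4),
      A x (s • stdb 2 + stdb 1) (s • stdb 2 + stdb 1) w =
        s * (s * A x (stdb 2) (stdb 2) w + A x (stdb 2) (stdb 1) w)
        + (s * A x (stdb 1) (stdb 2) w + A x (stdb 1) (stdb 1) w) := by
    intro s x w
    rw [h2, h3, h3]
  have hsub : (stdb 1 - stdb 2 : V4) = (-1 : ℝ) • stdb 2 + stdb 1 := by
    funext k; simp [Pi.sub_apply, Pi.add_apply, Pi.smul_apply, smul_eq_mul]; ring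
  have hadd : (stdb 1 + stdb 2 : V4) = (1 : ℝ) • stdb 2 + stdb 1 := by
    funext k; simp [Pi.add_apply, Pi.smul_apply, smul_eq_mul]; ring
  have hJu : jacobi A (stdb 1 - stdb 2) =
      !![0,0,0,0; 0,β,β,0; 0,-β,-β,0; 0,0,0,0] := by
    ext i j
    show eps i * A (stdb j) _ _ (stdb i) = _
    rw [hsub, key]
    simp only [hcomp]
    fin_cases i <;> fin_cases j <;>
      simp only [TypeIIComp, eps, Fin.reduceFinMk, Matrix.of_apply, Matrix.cons_val, Fin.isValue] <;> ring_nf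
  have hJv : jacobi A (stdb 1 + stdb 2) =
      !![2*δ,0,0,-2*δ; 0,β,-β,0; 0,β,-β,0; 2*δ,0,0,-2*δ] := by
    ext i j
    show eps i * A (stdb j) _ _ (stdb i) = _
    rw [hadd, key]
    simp only [hcomp]
    fin_cases i <;> fin_cases j <;>
      simp only [TypeIIComp, eps, Fin.reduceFinMk, Matrix.of_apply, Matrix.cons_val, Fin.isValue] <;> ring_nf
    -- rank of J(u): conjugate to diagonal ![β,0,0,0]
  have rank_conj : ∀ (P Q M : Matrix (Fin 4) (Fin 4) ℝ) (w : Fin 4 → ℝ),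
      IsUnit P.det → IsUnit Q.det → P * M * Q = Matrix.diagonal w →
      M.rank = Fintype.card {i : Fin 4 // w i ≠ 0} := by
    intro P Q M w hP hQ hPQ
    have h1 : (P * M * Q).rank = M.rank := by
      rw [Matrix.rank_mul_eq_left_of_isUnit_det _ _ hQ,
        Matrix.rank_mul_eq_right_of_isUnit_det _ _ hP]
    rw [← h1, hPQ, Matrix.rank_diagonal]
  have hdPu : IsUnit (!![0,1,0,0; 1,0,0,0; 0,1,1,0; 0,0,0,1] : Matrix (Fin 4) (Fin 4) ℝ).det := by
    simp [Matrix.det_succ_row_zero, Fin.sum_univ_succ, Fin.succAbove]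
  have hdQu : IsUnit (!![0,1,0,0; 1,0,-1,0; 0,0,1,0; 0,0,0,1] : Matrix (Fin 4) (Fin 4) ℝ).det := by
    simp [Matrix.det_succ_row_zero, Fin.sum_univ_succ, Fin.succAbove]
  have hdPv : IsUnit (!![1,0,0,0; 0,1,0,0; 0,-1,1,0; -1,0,0,1] : Matrix (Fin 4) (Fin 4) ℝ).det := by
    simp [Matrix.det_succ_row_zero, Fin.sum_univ_succ, Fin.succAbove]
  have hdQv : IsUnit (!![1,0,0,1; 0,1,1,0; 0,0,1,0; 0,0,0,1] : Matrix (Fin 4) (Fin 4) ℝ).det := by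
    simp [Matrix.det_succ_row_zero, Fin.sum_univ_succ, Fin.succAbove]
  have hdiagu : !![0,1,0,0; 1,0,0,0; 0,1,1,0; 0,0,0,1] * jacobi A (stdb 1 - stdb 2) *
      !![0,1,0,0; 1,0,-1,0; 0,0,1,0; 0,0,0,1] = Matrix.diagonal ![β,0,0,0] := by
    rw [hJu]
    ext i j
    fin_cases i <;> fin_cases j <;>
      simp [Matrix.mul_apply, Fin.sum_univ_four, Matrix.diagonal_apply] <;>
      first | ring1 | (norm_num [Matrix.vecHead, Matrix.vecTail]; try ring1)
  have hdiagv : !![1,0,0,0; 0,1,0,0; 0,-1,1,0; -1,0,0,1] * jacobi A (stdb 1 + stdb 2) *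
      !![1,0,0,1; 0,1,1,0; 0,0,1,0; 0,0,0,1] = Matrix.diagonal ![2*δ,β,0,0] := by
    rw [hJv]
    ext i j
    fin_cases i <;> fin_cases j <;>
      simp [Matrix.mul_apply, Fin.sum_univ_four, Matrix.diagonal_apply] <;>
      first | ring1 | (norm_num [Matrix.vecHead, Matrix.vecTail]; try ring1)
  have hru : (jacobi A (stdb 1 - stdb 2)).rank
      = Fintype.card {i : Fin 4 // ![β,0,0,0] i ≠ 0} :=
    rank_conj _ _ _ _ hdPu hdQu hdiagu
  have hrv : (jacobi A (stdb 1 + stdb 2)).rank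
      = Fintype.card {i : Fin 4 // ![2*δ,β,0,0] i ≠ 0} :=
    rank_conj _ _ _ _ hdPv hdQv hdiagv
  have hδ0 : 2 * δ ≠ 0 := by rcases hδ with h | h <;> rw [h] <;> norm_num
  have hmain : (β = 0 → (jacobi A (stdb 1 - stdb 2)).rank = 0 ∧
        (jacobi A (stdb 1 + stdb 2)).rank = 1) ∧
      (β ≠ 0 → (jacobi A (stdb 1 - stdb 2)).rank = 1 ∧
        (jacobi A (stdb 1 + stdb 2)).rank = 2) := by
    constructor
    · intro hb
      constructor
      · rw [hru]
        apply Fintype.card_eq_zero_iff.mpr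
        constructor
        rintro ⟨i, hi⟩
        apply hi
        fin_cases i <;> simp [hb]
      · rw [hrv]
        have e : ∀ i : Fin 4, (![2*δ,β,0,0] i ≠ 0) ↔ (i = 0) := by
          intro i; fin_cases i <;> simp [hδ0, hb]
        rw [Fintype.card_congr (Equiv.subtypeEquivRight e), Fintype.card_subtype_eq]
    · intro hb
      constructor
      · rw [hru]
        have e : ∀ i : Fin 4, (![β,(0:ℝ),0,0] i ≠ 0) ↔ (i = 0) := by
          intro i; fin_cases i <;> simp [hb]
        rw [Fintype.card_congr (Equiv.subtypeEquivRight e), Fintype.card_subtype_eq]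
      · rw [hrv]
        have e : ∀ i : Fin 4, (![2*δ,β,0,0] i ≠ 0) ↔ (i = 0 ∨ i = 1) := by
          intro i; fin_cases i <;> simp [hδ0, hb]
        rw [Fintype.card_congr (Equiv.subtypeEquivRight e)]
        decide
  have hne : (jacobi A (stdb 1 - stdb 2)).rank ≠ (jacobi A (stdb 1 + stdb 2)).rank := by
    by_cases hb : β = 0
    · obtain ⟨h1, h2⟩ := hmain.1 hb
      rw [h1, h2]; norm_num
    · obtain ⟨h1, h2⟩ := hmain.2 hb
      rw [h1, h2]; norm_num
  refine ⟨hmain, hne, ?_⟩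
  intro hNJO
  have hune : (stdb 1 - stdb 2 : V4) ≠ 0 := by
    intro h
    have := congrFun h 1
    simp [stdb, Pi.sub_apply] at this
  have hvne : (stdb 1 + stdb 2 : V4) ≠ 0 := by
    intro h
    have := congrFun h 1
    simp [stdb, Pi.add_apply] at this
  have hu' : (stdb 1 - stdb 2 : V4) = ![0,1,-1,0] := by
    funext k; fin_cases k <;> simp [stdb, Pi.sub_apply]
  have hv' : (stdb 1 + stdb 2 : V4) = ![0,1,1,0] := by
    funext k; fin_cases k <;> simp [stdb, Pi.add_apply]
  have hunull : nip (stdb 1 - stdb 2) (stdb 1 - stdb 2) = 0 := by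
    rw [hu']; simp [nip]
  have hvnull : nip (stdb 1 + stdb 2) (stdb 1 + stdb 2) = 0 := by
    rw [hv']; simp [nip]
  obtain ⟨L, hL, hLcomm⟩ := hNJO _ _ hune hvne hunull hvnull
  apply hne
  calc (jacobi A (stdb 1 - stdb 2)).rank
      = (jacobi A (stdb 1 - stdb 2) * L).rank :=
        (Matrix.rank_mul_eq_left_of_isUnit_det _ _ hL).symm
    _ = (L * jacobi A (stdb 1 + stdb 2)).rank := by rw [hLcomm]
    _ = (jacobi A (stdb 1 + stdb 2)).rank :=
        Matrix.rank_mul_eq_right_of_isUnit_det _ _ hL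
end
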